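/- Let β ∈ (1,2) and k ≥ 1. Then β ≤ γ_k if and only if (T_1^k ∘ T_0)(1/β) ≤ 1/β, where γ_k is the k-th multinacci number, T_0(x) = βx and T_1(x) = βx − 1. -/

import Mathlib

def T0 (β x : ℝ) : ℝ := β * x
def T1 (β x : ℝ) : ℝ := β * x - 1

lemma iter_T1 (β : ℝ) (n : ℕ) (x : ℝ) :
    (T1 β)^[n] x = β^n * x - ∑ i ∈ Finset.range n, β^i := by
  induction n generalizing x with
  | zero => simp
  | succ n ih =>
    rw [Function.iterate_succ_apply, ih, Finset.sum_range_succ]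
    simp only [T1]
    ring

lemma key_mono (k : ℕ) (a b : ℝ) (ha : 0 < a) (hab : a < b) :
    (a^(k+1) - ∑ i ∈ Finset.range (k+1), a^i) * b^(k+1) <
    (b^(k+1) - ∑ i ∈ Finset.range (k+1), b^i) * a^(k+1) := by
  have hb : 0 < b := ha.trans hab
  have hsum : ∑ i ∈ Finset.range (k+1), b^i * a^(k+1) <
      ∑ i ∈ Finset.range (k+1), a^i * b^(k+1) := by
    apply Finset.sum_lt_sum_of_nonempty (by simp)
    intro i hi
    have hik : i ≤ k := Nat.lt_succ_iff.mp (Finset.mem_range.mp hi)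
    have h1 : a^(k+1) = a^i * a^(k+1-i) := by
      rw [← pow_add]; congr 1; omega
    have h2 : b^(k+1) = b^i * b^(k+1-i) := by
      rw [← pow_add]; congr 1; omega
    rw [h1, h2]
    have hlt : a^(k+1-i) < b^(k+1-i) :=
      pow_lt_pow_left₀ hab ha.le (by omega)
    have hpa : 0 < a^i := pow_pos ha i
    have hpb : 0 < b^i := pow_pos hb i
    calc b^i * (a^i * a^(k+1-i)) < b^i * (a^i * b^(k+1-i)) := by
          apply mul_lt_mul_of_pos_left (mul_lt_mul_of_pos_left hlt hpa) hpb
      _ = a^i * (b^i * b^(k+1-i)) := by ring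
  rw [← Finset.sum_mul, ← Finset.sum_mul] at hsum
  nlinarith [hsum]

theorem le_gamma_iff (β : ℝ) (hβ : β ∈ Set.Ioo (1:ℝ) 2) (k : ℕ) (hk : 1 ≤ k)
    (γ : ℝ) (hγ : γ ∈ Set.Ioo (1:ℝ) 2)
    (hroot : γ^(k+1) - ∑ i ∈ Finset.range (k+1), γ^i = 0) :
    β ≤ γ ↔ (T1 β)^[k] (T0 β (1/β)) ≤ 1/β := by
  have hβ1 : 1 < β := hβ.1
  have hβ0 : 0 < β := by linarith
  have hγ0 : 0 < γ := by linarith [hγ.1]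
  have hT0 : T0 β (1/β) = 1 := by
    simp only [T0]
    field_simp [hβ0.ne']
  rw [hT0, iter_T1]
  have hsum : ∑ i ∈ Finset.range (k+1), β^i
      = β * ∑ i ∈ Finset.range k, β^i + 1 := by
    rw [Finset.sum_range_succ', Finset.mul_sum]
    simp [pow_succ, mul_comm]
  -- rewrite RHS of iff to polynomial condition
  have hiff : (β^k * 1 - ∑ i ∈ Finset.range k, β^i ≤ 1/β)
      ↔ (β^(k+1) - ∑ i ∈ Finset.range (k+1), β^i ≤ 0) := by
    rw [le_div_iff₀ hβ0, hsum]
    constructor <;> intro h <;> nlinarith [pow_succ β k]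
  rw [hiff]
  constructor
  · intro h
    rcases eq_or_lt_of_le h with rfl | hlt
    · linarith [hroot]
    · have := key_mono k β γ hβ0 hlt
      rw [hroot, zero_mul] at this
      have hγp : 0 < γ^(k+1) := pow_pos hγ0 _
      nlinarith
  · intro h
    by_contra hcon
    push_neg at hcon
    have := key_mono k γ β hγ0 hcon
    rw [hroot, zero_mul] at this
    have hγp : 0 < γ^(k+1) := pow_pos hγ0 _
    nlinarith
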